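/- arXiv:2202.03030 — 2 statements merged into one kernel-verified Lean document; each statement's English description precedes it below -/
import Mathlib

section
/- Let n ≥ 5 be an integer, let F, F' ∈ ℝ, and let α, β, α', β', γ' ∈ ℝ be arbitrary constants. Suppose that for every (T₁, …, Tₙ) ∈ ℝⁿ there exists A ∈ ℝ such that both 0 = α·T₁ + β·T₂ − T₄/(12(n−3)·n!) + (2/(n+2)!)·F·A and 0 = α'·T₁ + β'·T₂ + γ'·T₃ − T₅/(30(n−4)·n!) + (3/(n+3)!)·F'·A hold. Then one obtains a contradiction; i.e., no such F, F' exist. -/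
/-- the abstract linear-algebra core of Theorem 1.6. Equations I
and II of Proposition 26.2, holding for all values of the free transitivity
parameters T₁,…,Tₙ, are contradictory when n ≥ 5. (T is 0-indexed: T ⟨0,_⟩ = T₁.) -/
theorem no_homogeneous_models (n : ℕ) (hn : 5 ≤ n) (F F' α β α' β' γ' : ℝ)
    (h : ∀ T : Fin n → ℝ, ∃ A : ℝ,
      (0 = α * T ⟨0, by omega⟩ + β * T ⟨1, by omega⟩
          - T ⟨3, by omega⟩ / (12 * ((n : ℝ) - 3) * (n.factorial : ℝ))
          + (2 / (((n + 2).factorial : ℝ))) * F * A)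
      ∧ (0 = α' * T ⟨0, by omega⟩ + β' * T ⟨1, by omega⟩ + γ' * T ⟨2, by omega⟩
          - T ⟨4, by omega⟩ / (30 * ((n : ℝ) - 4) * (n.factorial : ℝ))
          + (3 / (((n + 3).factorial : ℝ))) * F' * A)) :
    False := by
  have hnr : (5:ℝ) ≤ (n:ℝ) := by exact_mod_cast hn
  have hn3 : ((n:ℝ) - 3) ≠ 0 := by linarith
  have hn4 : ((n:ℝ) - 4) ≠ 0 := by linarith
  have hfac : ((n.factorial : ℝ)) ≠ 0 := by
    exact_mod_cast n.factorial_ne_zero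
  have hfac2 : (((n+2).factorial : ℝ)) ≠ 0 := by
    exact_mod_cast (n+2).factorial_ne_zero
  have hfac3 : (((n+3).factorial : ℝ)) ≠ 0 := by
    exact_mod_cast (n+3).factorial_ne_zero
  obtain ⟨A, h1, h2⟩ := h (fun i => if (i:ℕ) = 3 then 1 else 0)
  simp only [show ((⟨0, by omega⟩ : Fin n) : ℕ) = 0 from rfl] at h1 h2
  norm_num at h1 h2
  -- h1 : 0 = -(1/(12*(n-3)*n!)) + 2/(n+2)! * F * A
  have hF : F ≠ 0 := by
    intro hF0
    rw [hF0] at h1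
    field_simp at h1
    simp at h1
    exact (n+2).factorial_ne_zero h1
  obtain ⟨B, g1, g2⟩ := h (fun i => if (i:ℕ) = 4 then 1 else 0)
  norm_num at g1 g2
  -- g1 : 0 = 2/(n+2)! * F * B
  have hB : B = 0 := by
    rcases g1 with (h' | h') | h'
    · exact absurd h' (n+2).factorial_ne_zero
    · exact absurd h' hF
    · exact h'
  rw [hB] at g2
  field_simp at g2
  simp at g2
  exact (n+3).factorial_ne_zero g2
end

section
/- Let n ≥ 2 and let F(x₁, …, xₙ) be a homogeneous polynomial of degree 4 over ℝ. Suppose that for every (T₁, …, Tₙ) ∈ ℝⁿ there exists B₁ ∈ ℝ such that T₁·∂F/∂x₁ + B₁·x₁³/2 + T₂·∂F/∂x₂ + ⋯ + Tₙ·∂F/∂xₙ = 0 identically. Then ∂F/∂x₂ = ⋯ = ∂F/∂xₙ = 0, so F depends only on x₁, i.e. F = c·x₁⁴ for some constant c. -/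
open MvPolynomial

lemma coeff_pderiv {n : ℕ} (i : Fin n) (m : Fin n →₀ ℕ) (f : MvPolynomial (Fin n) ℝ) :
    coeff m (pderiv i f) = ((m i + 1 : ℕ) : ℝ) * coeff (m + Finsupp.single i 1) f := by
  induction f using MvPolynomial.induction_on' with
  | monomial s a =>
    rw [pderiv_monomial, coeff_monomial, coeff_monomial]
    by_cases hs : s = m + Finsupp.single i 1
    · subst hs
      have h1 : m + Finsupp.single i 1 - Finsupp.single i 1 = m :=
        add_tsub_cancel_right (α := Fin n →₀ ℕ) m (Finsupp.single i 1)
      rw [if_pos h1, if_pos rfl, Finsupp.add_apply, Finsupp.single_eq_same]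
      push_cast; ring
    · rw [if_neg hs]
      by_cases hsub : s - Finsupp.single i 1 = m
      · rw [if_pos hsub]
        have hsi : s i = 0 := by
          by_contra hne
          apply hs
          have hle : Finsupp.single i 1 ≤ s := by
            rw [Finsupp.single_le_iff]; omega
          rw [← hsub, tsub_add_cancel_of_le hle]
        simp [hsi]
      · rw [if_neg hsub, mul_zero]
  | add p q hp hq =>
    simp only [map_add, coeff_add, hp, hq]; ring

/-- Assertion 8.3: if F is homogeneous of degree 4 and for every
choice of the transitivity parameters T₁,…,Tₙ there is B₁ with
Σᵢ Tᵢ·∂F/∂xᵢ + B₁·x₁³/2 = 0, then ∂F/∂xᵢ = 0 for i ≥ 2 and F = c·x₁⁴. -/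
theorem quartic_term_depends_only_on_x1 (n : ℕ) (hn : 2 ≤ n)
    (F : MvPolynomial (Fin n) ℝ) (hhom : F.IsHomogeneous 4)
    (h : ∀ T : Fin n → ℝ, ∃ B₁ : ℝ,
      (∑ i, C (T i) * pderiv i F) + C (B₁ / 2) * (X ⟨0, by omega⟩) ^ 3 = 0) :
    (∀ i : Fin n, i ≠ ⟨0, by omega⟩ → pderiv i F = 0) ∧
      ∃ c : ℝ, F = C c * (X ⟨0, by omega⟩) ^ 4 := by

  set i0 : Fin n := ⟨0, by omega⟩ with hi0
  -- Step A: each partial derivative is a multiple of X i0 ^ 3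
  have hA : ∀ i : Fin n, ∃ c : ℝ, pderiv i F = C c * (X i0 : MvPolynomial (Fin n) ℝ) ^ 3 := by
    intro i
    obtain ⟨B, hB⟩ := h (Pi.single i 1)
    have hsum : (∑ j, C ((Pi.single i 1 : Fin n → ℝ) j) * pderiv j F) = pderiv i F := by
      rw [Finset.sum_eq_single i]
      · simp
      · intro j _ hj; simp [Pi.single_eq_of_ne hj]
      · simp
    rw [hsum] at hB
    refine ⟨-(B / 2), ?_⟩
    rw [map_neg, neg_mul]
    exact eq_neg_of_add_eq_zero_left hB
  obtain ⟨c0, hc0⟩ := hA i0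
  -- Step B: for i ≠ i0, pderiv i F = 0
  have hB : ∀ i : Fin n, i ≠ i0 → pderiv i F = 0 := by
    intro i hi
    obtain ⟨c, hc⟩ := hA i
    -- the cross coefficient a = coeff (single i0 3 + single i 1) F
    set a : ℝ := coeff (Finsupp.single i0 3 + Finsupp.single i 1) F with ha
    -- from pderiv i0 F = c0 * X^3, coeff at (single i0 2 + single i 1) gives 3a = 0
    have key : (3 : ℝ) * a = 0 := by
      have h1 := coeff_pderiv i0 (Finsupp.single i0 2 + Finsupp.single i 1) F
      have hm : Finsupp.single i0 2 + Finsupp.single i 1 + Finsupp.single i0 1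
          = Finsupp.single i0 3 + Finsupp.single i 1 := by
        rw [add_right_comm, ← Finsupp.single_add]
      have happ : (Finsupp.single i0 2 + Finsupp.single i 1 : Fin n →₀ ℕ) i0 = 2 := by
        rw [Finsupp.add_apply, Finsupp.single_eq_same, Finsupp.single_apply]
        simp [hi]
      rw [hm, happ, hc0, coeff_C_mul, coeff_X_pow] at h1
      have hne : ¬ (Finsupp.single i0 3 = Finsupp.single i0 2 + Finsupp.single i 1) := by
        intro hcontra
        have := congrArg (fun g => g i) hcontra
        simp [Finsupp.single_apply, Ne.symm hi] at this
      rw [if_neg hne] at h1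
      push_cast at h1
      linarith
    have ha0 : a = 0 := by linarith
    -- from pderiv i F = c * X^3, coeff at (single i0 3) gives c = a
    have hcval : c = a := by
      have h1 := coeff_pderiv i (Finsupp.single i0 3) F
      have happ : (Finsupp.single i0 3 : Fin n →₀ ℕ) i = 0 := by
        rw [Finsupp.single_apply, if_neg (Ne.symm hi)]
      rw [happ, hc, coeff_C_mul, coeff_X_pow, if_pos rfl] at h1
      push_cast at h1
      linarith [h1]
    rw [hc, hcval, ha0, map_zero, zero_mul]
  refine ⟨hB, ⟨coeff (Finsupp.single i0 4) F, ?_⟩⟩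
  ext m
  rw [coeff_C_mul, coeff_X_pow]
  by_cases hcase : Finsupp.single i0 4 = m
  · rw [if_pos hcase, mul_one, hcase]
  · rw [if_neg hcase, mul_zero]
    by_cases hm : ∃ j, j ≠ i0 ∧ m j ≠ 0
    · obtain ⟨j, hj, hmj⟩ := hm
      have hle : Finsupp.single j 1 ≤ m := by rw [Finsupp.single_le_iff]; omega
      have h1 := coeff_pderiv j (m - Finsupp.single j 1) F
      rw [hB j hj, tsub_add_cancel_of_le hle] at h1
      have happ : (m - Finsupp.single j 1 : Fin n →₀ ℕ) j + 1 = m j := by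
        rw [Finsupp.tsub_apply, Finsupp.single_eq_same]; omega
      rw [happ, coeff_zero] at h1
      have hmjne : ((m j : ℕ) : ℝ) ≠ 0 := by
        exact_mod_cast hmj
      exact (mul_eq_zero.mp h1.symm).resolve_left hmjne
    · push_neg at hm
      by_contra hF0
      have hdeg : m.degree = 4 := by
        by_contra hd
        exact hF0 (hhom.coeff_eq_zero hd)
      have hmeq : m = Finsupp.single i0 (m i0) := by
        ext j
        by_cases hj : j = i0
        · subst hj; rw [Finsupp.single_eq_same]
        · rw [hm j hj, Finsupp.single_apply, if_neg (Ne.symm hj)]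
      have hds : ∀ (k : ℕ), Finsupp.degree (Finsupp.single i0 k) = k := by
        intro k
        rcases Nat.eq_zero_or_pos k with hk | hk
        · subst hk; simp [Finsupp.degree]
        · rw [Finsupp.degree_single]
      rw [hmeq, hds] at hdeg
      exact hcase (by rw [hmeq, hdeg])
end
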